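/- Let φ be a lower semicontinuous submeasure on ℕ and define φ_∞(x) = inf_n φ(x ∩ [n, ∞)). Then Exh_φ = {x ⊆ ℕ : φ_∞(x) = 0} is a P-ideal: it is an ideal, and for any sequence of sets xₙ ∈ Exh_φ there is x ∈ Exh_φ with xₙ \ x finite for every n. -/

import Mathlib

open scoped ENNReal

section Aux
variable {φ : Set ℕ → ℝ≥0∞}

theorem aux_mono (hmono : ∀ x y : Set ℕ, φ x ≤ φ (x ∪ y))
    {a b : Set ℕ} (h : a ⊆ b) : φ a ≤ φ b := by
  have := hmono a b
  rwa [Set.union_eq_self_of_subset_left h] at this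

theorem aux_anti (hmono : ∀ x y : Set ℕ, φ x ≤ φ (x ∪ y))
    (x : Set ℕ) {m n : ℕ} (h : m ≤ n) :
    φ (x ∩ Set.Ici n) ≤ φ (x ∩ Set.Ici m) :=
  aux_mono hmono (Set.inter_subset_inter_right _ (Set.Ici_subset_Ici.2 h))

theorem aux_finsum (hempty : φ ∅ = 0)
    (hsubadd : ∀ x y : Set ℕ, φ (x ∪ y) ≤ φ x + φ y)
    (s : Finset ℕ) (b : ℕ → Set ℕ) :
    φ (⋃ i ∈ s, b i) ≤ ∑ i ∈ s, φ (b i) := by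
  classical
  induction s using Finset.induction with
  | empty => simp [hempty]
  | insert a s hns ih =>
    rw [Finset.set_biUnion_insert, Finset.sum_insert hns]
    exact (hsubadd _ _).trans (add_le_add_right ih _)

theorem aux_ctble (hempty : φ ∅ = 0)
    (hmono : ∀ x y : Set ℕ, φ x ≤ φ (x ∪ y))
    (hsubadd : ∀ x y : Set ℕ, φ (x ∪ y) ≤ φ x + φ y)
    (hlsc : ∀ x : Set ℕ, φ x = ⨆ n : ℕ, φ (x ∩ Set.Iio n))
    (a : ℕ → Set ℕ) (ha : ∀ n, a n ⊆ Set.Ici n) :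
    φ (⋃ n, a n) ≤ ∑' n, φ (a n) := by
  rw [hlsc (⋃ n, a n)]
  refine iSup_le fun m => ?_
  have hsub : (⋃ n, a n) ∩ Set.Iio m ⊆ ⋃ n ∈ Finset.range m, a n := by
    rintro p ⟨hp, hpm⟩
    obtain ⟨n, hn⟩ := Set.mem_iUnion.1 hp
    have hnp : n ≤ p := ha n hn
    exact Set.mem_biUnion (Finset.mem_range.2 (lt_of_le_of_lt hnp hpm)) hn
  calc φ ((⋃ n, a n) ∩ Set.Iio m) ≤ φ (⋃ n ∈ Finset.range m, a n) :=
        aux_mono hmono hsub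
    _ ≤ ∑ n ∈ Finset.range m, φ (a n) := aux_finsum hempty hsubadd _ _
    _ ≤ ∑' n, φ (a n) := ENNReal.sum_le_tsum _

end Aux

/-- For a lower semicontinuous submeasure `φ` on `ℕ`, the family
`Exh_φ = {x : φ_∞(x) = 0}`, where `φ_∞(x) = inf_n φ(x ∩ [n,∞))`, is a
P-ideal: it is an ideal, and for any sequence of sets `xₙ ∈ Exh_φ` there is
`x ∈ Exh_φ` with `xₙ \ x` finite for every `n`. -/
theorem exhaustive_ideal_is_P_ideal
    (φ : Set ℕ → ℝ≥0∞)
    (hempty : φ ∅ = 0)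
    (hsingleton : ∀ a : ℕ, φ {a} < ⊤)
    (hmono : ∀ x y : Set ℕ, φ x ≤ φ (x ∪ y))
    (hsubadd : ∀ x y : Set ℕ, φ (x ∪ y) ≤ φ x + φ y)
    (hlsc : ∀ x : Set ℕ, φ x = ⨆ n : ℕ, φ (x ∩ Set.Iio n)) :
    (let Exh : Set (Set ℕ) := {x | (⨅ n : ℕ, φ (x ∩ Set.Ici n)) = 0}
     Exh.Nonempty ∧
     (∀ x y : Set ℕ, x ∈ Exh → y ⊆ x → y ∈ Exh) ∧
     (∀ x y : Set ℕ, x ∈ Exh → y ∈ Exh → x ∪ y ∈ Exh) ∧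
     (∀ x : ℕ → Set ℕ, (∀ n, x n ∈ Exh) →
        ∃ z ∈ Exh, ∀ n, (x n \ z).Finite)) := by
  intro Exh
  -- basic facts about ψ x = ⨅ n, φ (x ∩ Ici n)
  have hempty' : (∅ : Set ℕ) ∈ Exh := by
    show (⨅ n : ℕ, φ (∅ ∩ Set.Ici n)) = 0
    simp [hempty]
  have hpsimono : ∀ x y : Set ℕ, y ⊆ x →
      (⨅ n : ℕ, φ (y ∩ Set.Ici n)) ≤ ⨅ n : ℕ, φ (x ∩ Set.Ici n) :=
    fun x y h => iInf_mono fun n =>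
      aux_mono hmono (Set.inter_subset_inter_left _ h)
  have hdown : ∀ x y : Set ℕ, x ∈ Exh → y ⊆ x → y ∈ Exh := by
    intro x y hx hyx
    exact le_antisymm ((hpsimono x y hyx).trans_eq hx) zero_le
  have hpsisub : ∀ x y : Set ℕ,
      (⨅ n : ℕ, φ ((x ∪ y) ∩ Set.Ici n)) ≤
        (⨅ n : ℕ, φ (x ∩ Set.Ici n)) + ⨅ n : ℕ, φ (y ∩ Set.Ici n) := by
    intro x y
    rw [ENNReal.iInf_add_iInf (f := fun n => φ (x ∩ Set.Ici n))
      (g := fun n => φ (y ∩ Set.Ici n)) ?_]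
    · refine iInf_mono fun n => ?_
      rw [Set.union_inter_distrib_right]
      exact hsubadd _ _
    · intro i j
      exact ⟨max i j, add_le_add (aux_anti hmono x (le_max_left i j))
        (aux_anti hmono y (le_max_right i j))⟩
  have hunion : ∀ x y : Set ℕ, x ∈ Exh → y ∈ Exh → x ∪ y ∈ Exh := by
    intro x y hx hy
    refine le_antisymm ?_ zero_le
    calc (⨅ n : ℕ, φ ((x ∪ y) ∩ Set.Ici n)) ≤ _ + _ := hpsisub x y
      _ = 0 := by rw [hx, hy, add_zero]
  refine ⟨⟨∅, hempty'⟩, hdown, hunion, ?_⟩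
  -- the P-ideal property
  intro x hx
  -- choose cut points
  have hch : ∀ n : ℕ, ∃ k : ℕ, n ≤ k ∧ φ (x n ∩ Set.Ici k) < 2⁻¹ ^ n := by
    intro n
    have h0 : (⨅ j : ℕ, φ (x n ∩ Set.Ici j)) < 2⁻¹ ^ n := by
      rw [hx n]
      exact ENNReal.pow_pos (by simp) n
    obtain ⟨j, hj⟩ := iInf_lt_iff.1 h0
    exact ⟨max j n, le_max_right _ _,
      lt_of_le_of_lt (aux_anti hmono (x n) (le_max_left j n)) hj⟩
  choose k hk hkφ using hch
  set z : Set ℕ := ⋃ n, x n ∩ Set.Ici (k n) with hz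
  have hfin : ∀ n, (x n \ z).Finite := by
    intro n
    refine (Set.finite_Iio (k n)).subset ?_
    rintro p ⟨hp, hpz⟩
    by_contra hlt
    exact hpz (Set.mem_iUnion.2 ⟨n, hp, not_lt.1 fun h => hlt (h : p < k n)⟩)
  refine ⟨z, ?_, hfin⟩
  show (⨅ n : ℕ, φ (z ∩ Set.Ici n)) = 0
  -- the key bound
  have hbound : ∀ N : ℕ, (⨅ n : ℕ, φ (z ∩ Set.Ici n)) ≤ 2⁻¹ ^ N * 2 := by
    intro N
    set A : Set ℕ := ⋃ n ∈ Finset.range N, (x n ∩ Set.Ici (k n)) with hA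
    set B : Set ℕ := ⋃ n, (x (n + N) ∩ Set.Ici (k (n + N))) with hB
    have hzAB : z ⊆ A ∪ B := by
      intro p hp
      obtain ⟨n, hn⟩ := Set.mem_iUnion.1 hp
      rcases lt_or_ge n N with h | h
      · exact Or.inl (Set.mem_biUnion (Finset.mem_range.2 h) hn)
      · exact Or.inr (Set.mem_iUnion.2 ⟨n - N, by rwa [Nat.sub_add_cancel h]⟩)
    -- A is in Exh
    have hAExh : A ∈ Exh := by
      have : ∀ s : Finset ℕ, (⋃ n ∈ s, (x n ∩ Set.Ici (k n))) ∈ Exh := by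
        intro s
        classical
        induction s using Finset.induction with
        | empty => simpa using hempty'
        | insert a s hns ih =>
          rw [Finset.set_biUnion_insert]
          exact hunion _ _ (hdown _ _ (hx a) Set.inter_subset_left) ih
      exact this (Finset.range N)
    -- bound on B
    have hBle : φ B ≤ 2⁻¹ ^ N * 2 := by
      have h1 : φ B ≤ ∑' n : ℕ, φ (x (n + N) ∩ Set.Ici (k (n + N))) := by
        refine aux_ctble hempty hmono hsubadd hlsc _ fun n => ?_
        intro p hp
        have : k (n + N) ≤ p := hp.2
        exact le_trans (le_trans (Nat.le_add_right n N) (hk (n + N))) this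
      have h2 : ∑' n : ℕ, φ (x (n + N) ∩ Set.Ici (k (n + N))) ≤
          ∑' n : ℕ, (2⁻¹ : ℝ≥0∞) ^ (n + N) :=
        ENNReal.tsum_le_tsum fun n => (hkφ (n + N)).le
      have h3 : ∑' n : ℕ, (2⁻¹ : ℝ≥0∞) ^ (n + N) = 2⁻¹ ^ N * 2 := by
        have he : ∀ n : ℕ, (2⁻¹ : ℝ≥0∞) ^ (n + N) = 2⁻¹ ^ N * 2⁻¹ ^ n :=
          fun n => by rw [pow_add, mul_comm]
        rw [tsum_congr he, ENNReal.tsum_mul_left, ENNReal.tsum_geometric,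
          ENNReal.one_sub_inv_two, inv_inv]
      exact h1.trans (h2.trans_eq h3)
    calc (⨅ n : ℕ, φ (z ∩ Set.Ici n))
        ≤ ⨅ n : ℕ, φ ((A ∪ B) ∩ Set.Ici n) := hpsimono _ _ hzAB
      _ ≤ (⨅ n : ℕ, φ (A ∩ Set.Ici n)) + ⨅ n : ℕ, φ (B ∩ Set.Ici n) :=
          hpsisub A B
      _ = ⨅ n : ℕ, φ (B ∩ Set.Ici n) := by rw [hAExh, zero_add]
      _ ≤ φ (B ∩ Set.Ici 0) := iInf_le _ 0
      _ ≤ φ B := aux_mono hmono Set.inter_subset_left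
      _ ≤ 2⁻¹ ^ N * 2 := hBle
  by_contra hne
  have h2 : (⨅ n : ℕ, φ (z ∩ Set.Ici n)) / 2 ≠ 0 := by
    intro h
    rcases ENNReal.div_eq_zero_iff.1 h with h | h
    · exact hne h
    · exact absurd h (by norm_num)
  obtain ⟨N, hN⟩ := ENNReal.exists_inv_two_pow_lt h2
  have : (2⁻¹ : ℝ≥0∞) ^ N * 2 < (⨅ n : ℕ, φ (z ∩ Set.Ici n)) / 2 * 2 :=
    by rw [mul_comm _ (2:ℝ≥0∞), mul_comm _ (2:ℝ≥0∞)]; exact ENNReal.mul_lt_mul_right (by norm_num) (by norm_num) hN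
  rw [ENNReal.div_mul_cancel (by norm_num) (by norm_num)] at this
  exact absurd (hbound N) (not_le.2 this)
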